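/- Fix a prime p. For every formal power series g ∈ ℚ[[t]] with constant term 1, ℰ_p(ℒ_p(g)) = g. -/

import Mathlib

open PowerSeries

/-- The function `1_p : ℕ → ℤ`: `1_p(n) = 1` if `p ∤ n`, and `1_p(n) = 1 - p` if `p ∣ n`. -/
def onep (p n : ℕ) : ℤ := if p ∣ n then 1 - (p : ℤ) else 1

/-- The function `μ_p : ℕ → ℤ`: `μ_p(n) = μ(n)` if `p ∤ n`, and
`μ_p(n) = μ(m)·(p^s − p^{s−1})` if `n = m·p^s` with `p ∤ m` and `s ≥ 1`. -/
def mup (p n : ℕ) : ℤ :=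
  if p ∣ n then
    (ArithmeticFunction.moebius (n / p ^ (n.factorization p))) *
      ((p : ℤ) ^ (n.factorization p) - (p : ℤ) ^ (n.factorization p - 1))
  else ArithmeticFunction.moebius n

/-- Substitution of `t^m` for `t` in a formal power series: `(substPow m f) = f(t^m)`. -/
noncomputable def substPow (m : ℕ) (f : PowerSeries ℚ) : PowerSeries ℚ :=
  PowerSeries.mk fun n => if m ∣ n then PowerSeries.coeff (n / m) f else 0

/-- The coefficientwise sum `∑_{m=1}^∞ g m` of a family of power series in which the
`m`-th member has order `≥ m`. -/
noncomputable def seriesSum (g : ℕ → PowerSeries ℚ) : PowerSeries ℚ :=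
  PowerSeries.mk fun n => ∑ m ∈ Finset.Icc 1 n, PowerSeries.coeff n (g m)

/-- Formal exponential `exp(h) = ∑_{k≥0} h^k / k!` of a power series `h` with zero
constant term. -/
noncomputable def expS (h : PowerSeries ℚ) : PowerSeries ℚ :=
  PowerSeries.mk fun n =>
    ∑ k ∈ Finset.range (n + 1), (Nat.factorial k : ℚ)⁻¹ * PowerSeries.coeff n (h ^ k)

/-- Formal logarithm `log(1 + h) = ∑_{k≥1} (−1)^{k+1} h^k / k` for a power series `h`
with zero constant term. -/
noncomputable def logS (h : PowerSeries ℚ) : PowerSeries ℚ :=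
  PowerSeries.mk fun n =>
    ∑ k ∈ Finset.Icc 1 n, ((-1 : ℚ) ^ (k + 1) / k) * PowerSeries.coeff n (h ^ k)

/-- The operator `ℰ_p(f) = exp(∑_{m=1}^∞ (1_p(m)/m)·f(t^m))`. -/
noncomputable def calEp (p : ℕ) (f : PowerSeries ℚ) : PowerSeries ℚ :=
  expS (seriesSum fun m => ((onep p m : ℚ) / m) • substPow m f)

/-- The operator `ℒ_p(g) = ∑_{n=1}^∞ (μ_p(n)/n)·log g(t^n)`. -/
noncomputable def calLp (p : ℕ) (g : PowerSeries ℚ) : PowerSeries ℚ :=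
  seriesSum fun n => ((mup p n : ℚ) / n) • logS (substPow n g - 1)

section Infra

open Finset

lemma coeff_substPow (m : ℕ) (f : PowerSeries ℚ) (n : ℕ) :
    PowerSeries.coeff n (substPow m f) =
      if m ∣ n then PowerSeries.coeff (n / m) f else 0 := by
  simp [substPow]

lemma substPow_one (m : ℕ) : substPow m (1 : PowerSeries ℚ) = 1 := by
  ext n
  rw [coeff_substPow]
  rcases Nat.eq_zero_or_pos n with rfl | hn
  · simp
  · split_ifs with h
    · rcases h with ⟨c, rfl⟩
      have hm : 0 < m := Nat.pos_of_ne_zero (by rintro rfl; simp at hn)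
      have hc : 0 < c := Nat.pos_of_ne_zero (by rintro rfl; simp at hn)
      rw [Nat.mul_div_cancel_left _ hm]
      simp only [PowerSeries.coeff_one]
      rw [if_neg hc.ne', if_neg hn.ne']
    · simp [PowerSeries.coeff_one, hn.ne']

lemma substPow_sub (m : ℕ) (f g : PowerSeries ℚ) :
    substPow m (f - g) = substPow m f - substPow m g := by
  ext n
  simp only [coeff_substPow, map_sub]
  split_ifs <;> simp

lemma substPow_smul (m : ℕ) (c : ℚ) (f : PowerSeries ℚ) :
    substPow m (c • f) = c • substPow m f := by
  ext n
  simp only [coeff_substPow, PowerSeries.coeff_smul, smul_eq_mul]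
  split_ifs <;> simp

lemma substPow_mul (m : ℕ) (hm : 0 < m) (f g : PowerSeries ℚ) :
    substPow m (f * g) = substPow m f * substPow m g := by
  ext n
  rw [coeff_substPow]
  have key : ∀ x : ℕ × ℕ, x ∈ Finset.HasAntidiagonal.antidiagonal n →
      ¬ (m ∣ x.1 ∧ m ∣ x.2) →
      PowerSeries.coeff x.1 (substPow m f) * PowerSeries.coeff x.2 (substPow m g) = 0 := by
    intro x _ hx
    rw [coeff_substPow, coeff_substPow]
    rcases Decidable.not_and_iff_or_not.mp hx with h | h
    · rw [if_neg h, zero_mul]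
    · rw [if_neg h, mul_zero]
  rw [PowerSeries.coeff_mul (φ := substPow m f)]
  split_ifs with h
  · rcases h with ⟨c, rfl⟩
    rw [PowerSeries.coeff_mul, Nat.mul_div_cancel_left _ hm]
    have hinj : Function.Injective (fun p : ℕ × ℕ => (m * p.1, m * p.2)) := by
      intro a b hab
      simp only [Prod.mk.injEq] at hab
      ext
      · exact Nat.eq_of_mul_eq_mul_left hm hab.1
      · exact Nat.eq_of_mul_eq_mul_left hm hab.2
    have step1 : (Finset.HasAntidiagonal.antidiagonal c).sum
          (fun p => PowerSeries.coeff p.1 f * PowerSeries.coeff p.2 g)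
        = ∑ x ∈ (Finset.HasAntidiagonal.antidiagonal c).map ⟨_, hinj⟩,
            PowerSeries.coeff x.1 (substPow m f) * PowerSeries.coeff x.2 (substPow m g) := by
      rw [Finset.sum_map]
      apply Finset.sum_congr rfl
      intro p _
      simp [coeff_substPow, Nat.mul_div_cancel_left _ hm, dvd_mul_right]
    rw [step1]
    apply Finset.sum_subset
    · intro x hx
      simp only [Finset.mem_map, Function.Embedding.coeFn_mk] at hx
      rcases hx with ⟨p, hp, rfl⟩
      rw [Finset.HasAntidiagonal.mem_antidiagonal] at hp ⊢
      simp only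
      rw [← Nat.left_distrib, hp]
    · intro x hx hx2
      apply key x hx
      rintro ⟨⟨a, ha⟩, ⟨b, hb⟩⟩
      apply hx2
      rw [Finset.HasAntidiagonal.mem_antidiagonal] at hx
      simp only [Finset.mem_map, Function.Embedding.coeFn_mk]
      refine ⟨(a, b), ?_, ?_⟩
      · rw [Finset.HasAntidiagonal.mem_antidiagonal]
        apply Nat.eq_of_mul_eq_mul_left hm
        rw [Nat.left_distrib, ← ha, ← hb, hx]
      · simp [← ha, ← hb]
  · symm
    apply Finset.sum_eq_zero
    intro x hx
    apply key x hx
    rintro ⟨h1, h2⟩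
    exact h (by rw [← Finset.HasAntidiagonal.mem_antidiagonal.mp hx]; exact Nat.dvd_add h1 h2)

end Infra

section Infra2

lemma substPow_pow (m : ℕ) (hm : 0 < m) (f : PowerSeries ℚ) (k : ℕ) :
    substPow m (f ^ k) = (substPow m f) ^ k := by
  induction k with
  | zero => simpa using substPow_one m
  | succ k ih => rw [pow_succ, pow_succ, substPow_mul m hm, ih]

lemma constantCoeff_substPow (m : ℕ) (f : PowerSeries ℚ) :
    PowerSeries.constantCoeff (substPow m f) = PowerSeries.constantCoeff f := by
  have := coeff_substPow m f 0
  simpa [PowerSeries.coeff_zero_eq_constantCoeff] using this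

/-- If `h` has zero constant term then `coeff j (h^k) = 0` for `j < k`. -/
lemma coeff_pow_eq_zero {h : PowerSeries ℚ} (hh : PowerSeries.constantCoeff h = 0)
    {j k : ℕ} (hjk : j < k) : PowerSeries.coeff j (h ^ k) = 0 := by
  have hX : (PowerSeries.X : PowerSeries ℚ) ^ k ∣ h ^ k :=
    pow_dvd_pow_of_dvd (PowerSeries.X_dvd_iff.mpr hh) k
  exact (PowerSeries.X_pow_dvd_iff.mp hX) j hjk

lemma coeff_logS (h : PowerSeries ℚ) (n : ℕ) :
    PowerSeries.coeff n (logS h) =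
      ∑ k ∈ Finset.Icc 1 n, ((-1 : ℚ) ^ (k + 1) / k) * PowerSeries.coeff n (h ^ k) := by
  simp [logS]

lemma coeff_expS (h : PowerSeries ℚ) (n : ℕ) :
    PowerSeries.coeff n (expS h) =
      ∑ k ∈ Finset.range (n + 1), (Nat.factorial k : ℚ)⁻¹ * PowerSeries.coeff n (h ^ k) := by
  simp [expS]

lemma constantCoeff_logS (h : PowerSeries ℚ) :
    PowerSeries.constantCoeff (logS h) = 0 := by
  rw [← PowerSeries.coeff_zero_eq_constantCoeff, coeff_logS]
  simp

lemma constantCoeff_expS (h : PowerSeries ℚ) :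
    PowerSeries.constantCoeff (expS h) = 1 := by
  rw [← PowerSeries.coeff_zero_eq_constantCoeff, coeff_expS]
  simp

/-- Truncated description of `logS`. -/
lemma coeff_logS_trunc {h : PowerSeries ℚ} (hh : PowerSeries.constantCoeff h = 0)
    {j n : ℕ} (hjn : j ≤ n) :
    PowerSeries.coeff j (logS h) =
      PowerSeries.coeff j (∑ k ∈ Finset.Icc 1 n, ((-1 : ℚ) ^ (k + 1) / k) • h ^ k) := by
  rw [coeff_logS, map_sum]
  simp only [PowerSeries.coeff_smul, smul_eq_mul]
  apply Finset.sum_subset (Finset.Icc_subset_Icc_right hjn)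
  intro k hk hk2
  simp only [Finset.mem_Icc] at hk hk2
  rw [coeff_pow_eq_zero hh (by omega), mul_zero]

lemma coeff_expS_trunc {h : PowerSeries ℚ} (hh : PowerSeries.constantCoeff h = 0)
    {j n : ℕ} (hjn : j ≤ n) :
    PowerSeries.coeff j (expS h) =
      PowerSeries.coeff j (∑ k ∈ Finset.range (n + 1), ((Nat.factorial k : ℚ)⁻¹) • h ^ k) := by
  rw [coeff_expS, map_sum]
  simp only [PowerSeries.coeff_smul, smul_eq_mul]
  apply Finset.sum_subset (Finset.range_subset_range.mpr (by omega : j + 1 ≤ n + 1))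
  intro k hk hk2
  simp only [Finset.mem_range] at hk hk2
  rw [coeff_pow_eq_zero hh (by omega), mul_zero]

/-- `logS` commutes with `substPow`. -/
lemma logS_substPow {h : PowerSeries ℚ} (hh : PowerSeries.constantCoeff h = 0)
    {m : ℕ} (hm : 0 < m) : logS (substPow m h) = substPow m (logS h) := by
  ext j
  rw [coeff_logS, coeff_substPow]
  split_ifs with hd
  · rcases hd with ⟨c, rfl⟩
    rw [Nat.mul_div_cancel_left _ hm, coeff_logS]
    rw [← Finset.sum_subset (Finset.Icc_subset_Icc_right (Nat.le_mul_of_pos_left c hm))]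
    · apply Finset.sum_congr rfl
      intro k _
      rw [← substPow_pow m hm, coeff_substPow, if_pos (Dvd.intro c rfl),
        Nat.mul_div_cancel_left _ hm]
    · intro k hk hk2
      simp only [Finset.mem_Icc] at hk hk2
      rw [← substPow_pow m hm, coeff_substPow, if_pos (Dvd.intro c rfl),
        Nat.mul_div_cancel_left _ hm, coeff_pow_eq_zero hh (by omega), mul_zero]
  · apply Finset.sum_eq_zero
    intro k hk
    rw [← substPow_pow m hm, coeff_substPow, if_neg hd, mul_zero]

end Infra2

section ODE

local notation "Dq" => PowerSeries.derivative ℚ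

lemma coeff_deriv_pow (u : PowerSeries ℚ) (k n : ℕ) :
    PowerSeries.coeff n (Dq (u ^ (k + 1))) =
      (k + 1 : ℚ) * PowerSeries.coeff n (u ^ k * Dq u) := by
  have h2 : Dq (u ^ (k + 1)) = (k + 1 : ℕ) • ((u ^ (k + 1 - 1)) • Dq u) :=
    Derivation.leibniz_pow Dq u (k + 1)
  rw [h2, map_nsmul]
  simp only [Nat.add_sub_cancel, smul_eq_mul, nsmul_eq_mul]
  push_cast
  ring

lemma coeff_pow_mul_eq_zero {h w : PowerSeries ℚ} (hh : PowerSeries.constantCoeff h = 0)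
    {n k : ℕ} (hnk : n < k) : PowerSeries.coeff n (h ^ k * w) = 0 := by
  have hX : (PowerSeries.X : PowerSeries ℚ) ^ k ∣ h ^ k * w :=
    dvd_mul_of_dvd_left (pow_dvd_pow_of_dvd (PowerSeries.X_dvd_iff.mpr hh) k) w
  exact (PowerSeries.X_pow_dvd_iff.mp hX) n hnk

lemma derivative_expS {u : PowerSeries ℚ} (hu : PowerSeries.constantCoeff u = 0) :
    Dq (expS u) = Dq u * expS u := by
  ext n
  rw [PowerSeries.coeff_derivative, coeff_expS, Finset.sum_mul, Finset.sum_range_succ']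
  have h0 : (Nat.factorial 0 : ℚ)⁻¹ * PowerSeries.coeff (n + 1) (u ^ 0) * ((n : ℚ) + 1) = 0 := by
    simp [PowerSeries.coeff_one]
  push_cast
  rw [h0, add_zero]
  have key : ∀ k : ℕ,
      (Nat.factorial (k + 1) : ℚ)⁻¹ * PowerSeries.coeff (n + 1) (u ^ (k + 1)) * ((n : ℚ) + 1)
        = (Nat.factorial k : ℚ)⁻¹ * PowerSeries.coeff n (u ^ k * Dq u) := by
    intro k
    have h1 : PowerSeries.coeff n (Dq (u ^ (k + 1)))
        = PowerSeries.coeff (n + 1) (u ^ (k + 1)) * ((n : ℚ) + 1) := by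
      rw [PowerSeries.coeff_derivative]
      try push_cast
      try ring
    rw [coeff_deriv_pow] at h1
    have hfac : (Nat.factorial (k + 1) : ℚ) = ((k : ℚ) + 1) * Nat.factorial k := by
      rw [Nat.factorial_succ]; push_cast; ring
    have hk0 : (Nat.factorial k : ℚ) ≠ 0 := Nat.cast_ne_zero.mpr (Nat.factorial_ne_zero k)
    have hk1 : ((k : ℚ) + 1) ≠ 0 := by positivity
    rw [mul_assoc, ← h1, hfac]
    field_simp
    try ring
  rw [Finset.sum_congr rfl fun k _ => key k]
  have hP : PowerSeries.coeff n (Dq u * expS u)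
      = PowerSeries.coeff n
          (Dq u * ∑ k ∈ Finset.range (n + 1), (Nat.factorial k : ℚ)⁻¹ • u ^ k) := by
    rw [PowerSeries.coeff_mul, PowerSeries.coeff_mul]
    apply Finset.sum_congr rfl
    intro x hx
    rw [Finset.HasAntidiagonal.mem_antidiagonal] at hx
    rw [coeff_expS_trunc hu (show x.2 ≤ n by omega)]
  rw [hP, Finset.mul_sum, map_sum]
  apply Finset.sum_congr rfl
  intro k _
  rw [mul_smul_comm, PowerSeries.coeff_smul, smul_eq_mul, mul_comm (Dq u)]

lemma logS_ODE {h : PowerSeries ℚ} (hh : PowerSeries.constantCoeff h = 0) :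
    (1 + h) * Dq (logS h) = Dq h := by
  ext n
  set Q : PowerSeries ℚ := ∑ k ∈ Finset.Icc 1 (n + 1), ((-1 : ℚ) ^ (k + 1) / k) • h ^ k with hQ
  have hcoeff : ∀ j ≤ n, PowerSeries.coeff j (Dq (logS h)) = PowerSeries.coeff j (Dq Q) := by
    intro j hj
    rw [PowerSeries.coeff_derivative, PowerSeries.coeff_derivative,
      coeff_logS_trunc hh (show j + 1 ≤ n + 1 by omega)]
  have hmul : PowerSeries.coeff n ((1 + h) * Dq (logS h))
      = PowerSeries.coeff n ((1 + h) * Dq Q) := by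
    rw [PowerSeries.coeff_mul, PowerSeries.coeff_mul]
    apply Finset.sum_congr rfl
    intro x hx
    rw [Finset.HasAntidiagonal.mem_antidiagonal] at hx
    rw [hcoeff x.2 (by omega)]
  rw [hmul]
  have hDQ : Dq Q = (∑ k ∈ Finset.Icc 1 (n + 1), ((-1 : ℚ) ^ (k + 1)) • h ^ (k - 1)) * Dq h := by
    rw [hQ, map_sum, Finset.sum_mul]
    apply Finset.sum_congr rfl
    intro k hk
    rw [Finset.mem_Icc] at hk
    obtain ⟨k, rfl⟩ : ∃ j, k = j + 1 := ⟨k - 1, by omega⟩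
    rw [Derivation.map_smul, Derivation.leibniz_pow, Nat.add_sub_cancel,
      ← Nat.cast_smul_eq_nsmul ℚ, smul_smul]
    have hc : (-1 : ℚ) ^ (k + 1 + 1) / ((k + 1 : ℕ) : ℚ) * ((k + 1 : ℕ) : ℚ)
        = (-1 : ℚ) ^ (k + 1 + 1) :=
      div_mul_cancel₀ _ (Nat.cast_ne_zero.mpr k.succ_ne_zero)
    rw [hc, smul_eq_mul, smul_mul_assoc]
  rw [hDQ, ← mul_assoc]
  have hreidx : (∑ k ∈ Finset.Icc 1 (n + 1), ((-1 : ℚ) ^ (k + 1)) • h ^ (k - 1))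
      = ∑ i ∈ Finset.range (n + 1), ((-1 : ℚ) ^ i) • h ^ i := by
    rw [← Finset.Ico_add_one_right_eq_Icc, Finset.sum_Ico_eq_sum_range]
    simp only [Nat.add_sub_cancel, show n + 1 + 1 - 1 = n + 1 from rfl]
    apply Finset.sum_congr rfl
    intro i _
    congr 1
    · rw [show 1 + i + 1 = i + 2 by ring, pow_add]
      norm_num
    · congr 1
      omega
  rw [hreidx]
  have htel : (1 + h) * (∑ i ∈ Finset.range (n + 1), ((-1 : ℚ) ^ i) • h ^ i)
      = 1 - ((-1 : ℚ) ^ (n + 1)) • h ^ (n + 1) := by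
    rw [Finset.mul_sum]
    have : ∀ i ∈ Finset.range (n + 1), (1 + h) * (((-1 : ℚ) ^ i) • h ^ i)
        = ((-1 : ℚ) ^ i) • h ^ i - ((-1 : ℚ) ^ (i + 1)) • h ^ (i + 1) := by
      intro i _
      simp only [PowerSeries.smul_eq_C_mul, map_pow, map_neg, map_one]
      ring
    rw [Finset.sum_congr rfl this, Finset.sum_range_sub' (fun i => ((-1 : ℚ) ^ i) • h ^ i)]
    simp
  rw [htel, sub_mul, one_mul, map_sub, smul_mul_assoc, PowerSeries.coeff_smul,
    coeff_pow_mul_eq_zero hh (Nat.lt_succ_self n), smul_zero, sub_zero]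

end ODE

section Arith

open ArithmeticFunction

variable {p : ℕ}

lemma onep_one (hp : p.Prime) : onep p 1 = 1 := by
  rw [onep, if_neg (fun h => hp.ne_one (Nat.dvd_one.mp h))]

lemma mup_one (hp : p.Prime) : mup p 1 = 1 := by
  rw [mup, if_neg (fun h => hp.ne_one (Nat.dvd_one.mp h))]
  simp

lemma mup_zero (p : ℕ) : mup p 0 = 0 := by
  rw [mup]
  split_ifs <;> simp

lemma onep_mul_coprime (hp : p.Prime) {m n : ℕ} (h : Nat.Coprime m n) :
    onep p (m * n) = onep p m * onep p n := by
  by_cases hm : p ∣ m <;> by_cases hn : p ∣ n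
  · exact absurd (Nat.eq_one_of_dvd_coprimes h hm hn) hp.ne_one
  · rw [onep, onep, onep, if_pos (hm.mul_right n), if_pos hm, if_neg hn, mul_one]
  · rw [onep, onep, onep, if_pos (hn.mul_left m), if_neg hm, if_pos hn, one_mul]
  · have : ¬ p ∣ m * n := by
      intro hd
      rcases (Nat.Prime.dvd_mul hp).mp hd with h' | h' <;> [exact hm h'; exact hn h']
    rw [onep, onep, onep, if_neg this, if_neg hm, if_neg hn, mul_one]

lemma mup_mul_coprime (hp : p.Prime) {m n : ℕ} (h : Nat.Coprime m n) :
    mup p (m * n) = mup p m * mup p n := by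
  rcases Nat.eq_zero_or_pos m with rfl | hm0
  · simp [mup_zero]
  rcases Nat.eq_zero_or_pos n with rfl | hn0
  · simp [mup_zero]
  -- helper for the asymmetric case
  have main : ∀ m n : ℕ, 0 < m → 0 < n → Nat.Coprime m n → p ∣ m → ¬ p ∣ n →
      mup p (m * n) = mup p m * mup p n := by
    intro m n hm0 hn0 h hm hn
    have hs : (m * n).factorization p = m.factorization p := by
      rw [Nat.factorization_mul hm0.ne' hn0.ne']
      simp [Nat.factorization_eq_zero_of_not_dvd hn]
    set s := m.factorization p with hsdef
    obtain ⟨m', hm'⟩ := Nat.ordProj_dvd m p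
    rw [← hsdef] at hm'
    have hppow : 0 < p ^ s := pow_pos hp.pos s
    have hdiv1 : m / p ^ s = m' := by rw [hm', Nat.mul_div_cancel_left _ hppow]
    have hdiv2 : m * n / p ^ s = m' * n := by
      rw [hm', mul_assoc, Nat.mul_div_cancel_left _ hppow]
    have hcop : Nat.Coprime m' n :=
      Nat.Coprime.coprime_dvd_left ⟨p ^ s, by rw [hm']; ring⟩ h
    rw [mup, mup, mup, if_pos (hm.mul_right n), if_pos hm, if_neg hn, hs, hdiv1, hdiv2,
      isMultiplicative_moebius.map_mul_of_coprime hcop]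
    try push_cast
    try ring
  by_cases hm : p ∣ m <;> by_cases hn : p ∣ n
  · exact absurd (Nat.eq_one_of_dvd_coprimes h hm hn) hp.ne_one
  · exact main m n hm0 hn0 h hm hn
  · rw [mul_comm m n, mul_comm (mup p m)]
    exact main n m hn0 hm0 h.symm hn hm
  · have hmn : ¬ p ∣ m * n := by
      intro hd
      rcases (Nat.Prime.dvd_mul hp).mp hd with h' | h' <;> [exact hm h'; exact hn h']
    rw [mup, mup, mup, if_neg hmn, if_neg hm, if_neg hn,
      isMultiplicative_moebius.map_mul_of_coprime h]
    try push_cast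
    try ring

/-- `A(n) = onep p n / n` as an arithmetic function. -/
noncomputable def Af (p : ℕ) : ArithmeticFunction ℚ :=
  ⟨fun n => if n = 0 then 0 else (onep p n : ℚ) / n, rfl⟩

/-- `B(n) = mup p n / n` as an arithmetic function. -/
noncomputable def Bf (p : ℕ) : ArithmeticFunction ℚ :=
  ⟨fun n => if n = 0 then 0 else (mup p n : ℚ) / n, rfl⟩

lemma Af_apply {n : ℕ} (hn : n ≠ 0) : Af p n = (onep p n : ℚ) / n := if_neg hn

lemma Bf_apply {n : ℕ} (hn : n ≠ 0) : Bf p n = (mup p n : ℚ) / n := if_neg hn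

lemma Af_mult (hp : p.Prime) : (Af p).IsMultiplicative := by
  constructor
  · rw [Af_apply one_ne_zero, onep_one hp]
    norm_num
  · intro m n h
    rcases Nat.eq_zero_or_pos m with rfl | hm0
    · simp [Af, ArithmeticFunction.coe_mk]
    rcases Nat.eq_zero_or_pos n with rfl | hn0
    · simp [Af, ArithmeticFunction.coe_mk]
    rw [Af_apply hm0.ne', Af_apply hn0.ne', Af_apply (by positivity),
      onep_mul_coprime hp h]
    push_cast
    rw [div_mul_div_comm]

lemma Bf_mult (hp : p.Prime) : (Bf p).IsMultiplicative := by
  constructor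
  · rw [Bf_apply one_ne_zero, mup_one hp]
    norm_num
  · intro m n h
    rcases Nat.eq_zero_or_pos m with rfl | hm0
    · simp [Bf, ArithmeticFunction.coe_mk]
    rcases Nat.eq_zero_or_pos n with rfl | hn0
    · simp [Bf, ArithmeticFunction.coe_mk]
    rw [Bf_apply hm0.ne', Bf_apply hn0.ne', Bf_apply (by positivity),
      mup_mul_coprime hp h]
    push_cast
    rw [div_mul_div_comm]

end Arith

section AB

open ArithmeticFunction Finset

variable {p q : ℕ}

lemma not_p_dvd_pow (hp : p.Prime) (hq : q.Prime) (hne : q ≠ p) (j : ℕ) : ¬ p ∣ q ^ j :=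
  fun h => hne ((Nat.prime_dvd_prime_iff_eq hp hq).mp (hp.dvd_of_dvd_pow h)).symm

lemma Af_one (hp : p.Prime) : Af p 1 = 1 := by
  rw [Af_apply one_ne_zero, onep_one hp]; norm_num

lemma Bf_one (hp : p.Prime) : Bf p 1 = 1 := by
  rw [Bf_apply one_ne_zero, mup_one hp]; norm_num

lemma Af_pp_self (hp : p.Prime) {j : ℕ} (hj : j ≠ 0) :
    Af p (p ^ j) = ((1 : ℚ) - p) / (p : ℚ) ^ j := by
  rw [Af_apply (pow_ne_zero _ hp.pos.ne'), onep, if_pos (dvd_pow_self p hj)]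
  push_cast
  ring

lemma Af_pp_ne (hp : p.Prime) (hq : q.Prime) (hne : q ≠ p) (j : ℕ) :
    Af p (q ^ j) = 1 / (q : ℚ) ^ j := by
  rw [Af_apply (pow_ne_zero _ hq.pos.ne'), onep, if_neg (not_p_dvd_pow hp hq hne j)]
  push_cast
  ring

lemma mup_pp_self (hp : p.Prime) {j : ℕ} (hj : j ≠ 0) :
    mup p (p ^ j) = (p : ℤ) ^ j - (p : ℤ) ^ (j - 1) := by
  rw [mup, if_pos (dvd_pow_self p hj)]
  have hfac : (p ^ j).factorization p = j := by
    simp [Nat.Prime.factorization_pow hp]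
  rw [hfac, Nat.div_self (pow_pos hp.pos j), ArithmeticFunction.moebius_apply_one, one_mul]

lemma Bf_pp_self (hp : p.Prime) {j : ℕ} (hj : j ≠ 0) :
    Bf p (p ^ j) = 1 - 1 / (p : ℚ) := by
  rw [Bf_apply (pow_ne_zero _ hp.pos.ne'), mup_pp_self hp hj]
  obtain ⟨j, rfl⟩ : ∃ i, j = i + 1 := ⟨j - 1, by omega⟩
  have hpne : (p : ℚ) ≠ 0 := Nat.cast_ne_zero.mpr hp.pos.ne'
  push_cast
  field_simp
  ring

lemma Bf_pp_ne (hp : p.Prime) (hq : q.Prime) (hne : q ≠ p) (j : ℕ) :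
    Bf p (q ^ j) = ((ArithmeticFunction.moebius (q ^ j) : ℤ) : ℚ) / (q : ℚ) ^ j := by
  rw [Bf_apply (pow_ne_zero _ hq.pos.ne'), mup, if_neg (not_p_dvd_pow hp hq hne j)]
  push_cast
  ring

lemma moebius_sum_pp (hq : q.Prime) {i : ℕ} (hi : i ≠ 0) :
    ∑ k ∈ Finset.range (i + 1), ((ArithmeticFunction.moebius (q ^ k) : ℤ) : ℚ) = 0 := by
  obtain ⟨i, rfl⟩ : ∃ j, i = j + 1 := ⟨i - 1, by omega⟩
  rw [Finset.sum_range_succ']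
  have h0 : ((ArithmeticFunction.moebius (q ^ 0) : ℤ) : ℚ) = 1 := by simp
  have hsum : ∑ k ∈ Finset.range (i + 1), ((ArithmeticFunction.moebius (q ^ (k + 1)) : ℤ) : ℚ)
      = -1 := by
    rw [Finset.sum_eq_single_of_mem 0 (Finset.mem_range.mpr (by omega))]
    · simp [ArithmeticFunction.moebius_apply_prime hq]
    · intro k _ hk
      rw [ArithmeticFunction.moebius_apply_prime_pow hq (Nat.succ_ne_zero k)]
      simp [hk]
  rw [hsum, h0]
  ring

lemma Af_partial_sum (hp : p.Prime) (k : ℕ) :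
    ∑ j ∈ Finset.range (k + 1), Af p (p ^ j) = 1 / (p : ℚ) ^ k := by
  have hpne : (p : ℚ) ≠ 0 := Nat.cast_ne_zero.mpr hp.pos.ne'
  induction k with
  | zero => simp [Af_one hp]
  | succ k ih =>
    rw [Finset.sum_range_succ, ih, Af_pp_self hp (Nat.succ_ne_zero k : k + 1 ≠ 0)]
    field_simp
    rw [pow_succ]
    ring

lemma AB_eq_one (hp : p.Prime) : Af p * Bf p = 1 := by
  rw [ArithmeticFunction.IsMultiplicative.eq_iff_eq_on_prime_powers _
    ((Af_mult hp).mul (Bf_mult hp)) _ ArithmeticFunction.isMultiplicative_one]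
  intro q i hq
  rcases Nat.eq_zero_or_pos i with rfl | hi0
  · simp [ArithmeticFunction.mul_apply, Af_one hp, Bf_one hp]
  have hne1 : q ^ i ≠ 1 := Nat.ne_of_gt (Nat.one_lt_pow hi0.ne' hq.one_lt)
  rw [ArithmeticFunction.one_apply_ne hne1, ArithmeticFunction.mul_apply,
    Nat.sum_divisorsAntidiagonal (Af p · * Bf p ·), Nat.sum_divisors_prime_pow hq]
  have hqpow : ∀ j ∈ Finset.range (i + 1), q ^ i / q ^ j = q ^ (i - j) := by
    intro j hj
    rw [Finset.mem_range] at hj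
    rw [Nat.pow_div (by omega) hq.pos]
  rw [Finset.sum_congr rfl fun j hj => by rw [hqpow j hj]]
  by_cases hqp : q = p
  · subst hqp
    have hpne : (q : ℚ) ≠ 0 := Nat.cast_ne_zero.mpr hq.pos.ne'
    have hterm : ∀ j ∈ Finset.range (i + 1),
        Af q (q ^ j) * Bf q (q ^ (i - j))
          = Af q (q ^ j) * (1 - 1 / (q : ℚ)) + (if j = i then Af q (q ^ j) * (1 / q) else 0) := by
      intro j hj
      rw [Finset.mem_range] at hj
      by_cases hji : j = i
      · subst hji
        rw [Nat.sub_self, pow_zero, Bf_one hq, if_pos rfl]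
        ring
      · rw [Bf_pp_self hq (by omega), if_neg hji, add_zero]
    rw [Finset.sum_congr rfl hterm, Finset.sum_add_distrib, ← Finset.sum_mul, Af_partial_sum hq,
      Finset.sum_ite_eq' (Finset.range (i + 1)) i (fun j => Af q (q ^ j) * (1 / (q : ℚ))),
      if_pos (Finset.mem_range.mpr (by omega)), Af_pp_self hq hi0.ne']
    field_simp
    try ring
  · have hterm : ∀ j ∈ Finset.range (i + 1),
        Af p (q ^ j) * Bf p (q ^ (i - j))
          = ((ArithmeticFunction.moebius (q ^ (i - j)) : ℤ) : ℚ) / (q : ℚ) ^ i := by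
      intro j hj
      rw [Finset.mem_range] at hj
      rw [Af_pp_ne hp hq hqp, Bf_pp_ne hp hq hqp]
      rw [div_mul_div_comm, one_mul, ← pow_add]
      congr 2
      omega
    rw [Finset.sum_congr rfl hterm, ← Finset.sum_div]
    have : ∑ j ∈ Finset.range (i + 1), ((ArithmeticFunction.moebius (q ^ (i - j)) : ℤ) : ℚ)
        = ∑ k ∈ Finset.range (i + 1), ((ArithmeticFunction.moebius (q ^ k) : ℤ) : ℚ) := by
      rw [← Finset.sum_range_reflect (fun k => ((ArithmeticFunction.moebius (q ^ k) : ℤ) : ℚ))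
        (i + 1)]
      apply Finset.sum_congr rfl
      intro j hj
      have hidx : i + 1 - 1 - j = i - j := by omega
      rw [hidx]
    rw [this, moebius_sum_pp hq hi0.ne', zero_div]

end AB

section Glue

open ArithmeticFunction

local notation "Dq" => PowerSeries.derivative ℚ

lemma coeff_seriesSum (g : ℕ → PowerSeries ℚ) (n : ℕ) :
    PowerSeries.coeff n (seriesSum g) = ∑ m ∈ Finset.Icc 1 n, PowerSeries.coeff n (g m) := by
  simp [seriesSum]

lemma seriesSum_congr {g h : ℕ → PowerSeries ℚ} (H : ∀ m, 1 ≤ m → g m = h m) :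
    seriesSum g = seriesSum h := by
  ext n
  rw [coeff_seriesSum, coeff_seriesSum]
  apply Finset.sum_congr rfl
  intro m hm
  rw [Finset.mem_Icc] at hm
  rw [H m hm.1]

lemma coeff_dirichlet (c : ℕ → ℚ) {L : PowerSeries ℚ} (N : ℕ) :
    PowerSeries.coeff N (seriesSum fun n => c n • substPow n L)
      = ∑ d ∈ N.divisors, c d * PowerSeries.coeff (N / d) L := by
  rw [coeff_seriesSum]
  rw [show N.divisors = Finset.filter (· ∣ N) (Finset.Ico 1 (N + 1)) from rfl]
  rw [Finset.sum_filter, ← Finset.Ico_add_one_right_eq_Icc]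
  apply Finset.sum_congr rfl
  intro m _
  rw [PowerSeries.coeff_smul, smul_eq_mul, coeff_substPow]
  split_ifs <;> simp

/-- coefficient arithmetic function of a power series with zero constant term -/
noncomputable def coeffAF (L : PowerSeries ℚ) (hL : PowerSeries.coeff 0 L = 0) :
    ArithmeticFunction ℚ := ⟨fun k => PowerSeries.coeff k L, hL⟩

lemma coeffAF_apply {L : PowerSeries ℚ} (hL : PowerSeries.coeff 0 L = 0) (k : ℕ) :
    coeffAF L hL k = PowerSeries.coeff k L := rfl

lemma calLp_eq (p : ℕ) (hp : p.Prime) {g : PowerSeries ℚ}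
    (hg : PowerSeries.constantCoeff g = 1) :
    calLp p g = seriesSum fun n => ((mup p n : ℚ) / n) • substPow n (logS (g - 1)) := by
  apply seriesSum_congr
  intro n hn
  have hsub : substPow n g - 1 = substPow n (g - 1) := by
    rw [substPow_sub, substPow_one]
  have hc : PowerSeries.constantCoeff (g - 1) = 0 := by
    rw [map_sub, hg, map_one, sub_self]
  rw [hsub, logS_substPow hc hn]

lemma mainSum_eq (p : ℕ) (hp : p.Prime) {g : PowerSeries ℚ}
    (hg : PowerSeries.constantCoeff g = 1) :
    (seriesSum fun m => ((onep p m : ℚ) / m) • substPow m (calLp p g)) = logS (g - 1) := by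
  set L := logS (g - 1) with hLdef
  have hL0 : PowerSeries.coeff 0 L = 0 := by
    rw [PowerSeries.coeff_zero_eq_constantCoeff]
    exact constantCoeff_logS _
  set ℓ := coeffAF L hL0 with hldef
  have hcalLp : ∀ k : ℕ, PowerSeries.coeff k (calLp p g) = (Bf p * ℓ) k := by
    intro k
    rw [calLp_eq p hp hg, ← hLdef, coeff_dirichlet, ArithmeticFunction.mul_apply,
      Nat.sum_divisorsAntidiagonal (Bf p · * ℓ ·)]
    apply Finset.sum_congr rfl
    intro d hd
    rw [Nat.mem_divisors] at hd
    have hd0 : d ≠ 0 := by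
      rintro rfl
      exact hd.2 (zero_dvd_iff.mp hd.1)
    rw [Bf_apply hd0, coeffAF_apply]
  ext N
  rw [coeff_dirichlet]
  have : ∑ d ∈ N.divisors, ((onep p d : ℚ) / d) * PowerSeries.coeff (N / d) (calLp p g)
      = (Af p * (Bf p * ℓ)) N := by
    rw [ArithmeticFunction.mul_apply, Nat.sum_divisorsAntidiagonal (Af p · * (Bf p * ℓ) ·)]
    apply Finset.sum_congr rfl
    intro d hd
    rw [Nat.mem_divisors] at hd
    have hd0 : d ≠ 0 := by
      rintro rfl
      exact hd.2 (zero_dvd_iff.mp hd.1)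
    rw [Af_apply hd0, hcalLp]
  rw [this, ← mul_assoc, AB_eq_one hp, one_mul, coeffAF_apply]

lemma expS_logS {g : PowerSeries ℚ} (hg : PowerSeries.constantCoeff g = 1) :
    expS (logS (g - 1)) = g := by
  have hc : PowerSeries.constantCoeff (g - 1) = 0 := by
    rw [map_sub, hg, map_one, sub_self]
  set u := logS (g - 1) with hu
  have hu0 : PowerSeries.constantCoeff u = 0 := constantCoeff_logS _
  have hDe : Dq (expS u) = Dq u * expS u := derivative_expS hu0
  have hODE : g * Dq u = Dq g := by
    have := logS_ODE hc
    have h1 : (1 : PowerSeries ℚ) + (g - 1) = g := by ring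
    have h2 : Dq (g - 1) = Dq g := by
      rw [map_sub, Derivation.map_one_eq_zero, sub_zero]
    rw [h1, h2] at this
    exact this
  ext n
  induction n using Nat.strong_induction_on with
  | _ n ih =>
    match n with
    | 0 =>
      have e1 : PowerSeries.coeff 0 (expS u) = 1 := by
        rw [PowerSeries.coeff_zero_eq_constantCoeff, constantCoeff_expS]
      have e2 : PowerSeries.coeff 0 g = 1 := by
        rw [PowerSeries.coeff_zero_eq_constantCoeff, hg]
      rw [e1, e2]
    | Nat.succ n =>
      have h1 : PowerSeries.coeff n (Dq (expS u))
          = PowerSeries.coeff (n + 1) (expS u) * ((n : ℚ) + 1) := by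
        rw [PowerSeries.coeff_derivative]
        try push_cast
        try ring
      have h2 : PowerSeries.coeff n (Dq g)
          = PowerSeries.coeff (n + 1) g * ((n : ℚ) + 1) := by
        rw [PowerSeries.coeff_derivative]
        try push_cast
        try ring
      have h3 : PowerSeries.coeff n (Dq u * expS u)
          = PowerSeries.coeff n (Dq u * g) := by
        rw [PowerSeries.coeff_mul, PowerSeries.coeff_mul]
        apply Finset.sum_congr rfl
        intro x hx
        rw [Finset.HasAntidiagonal.mem_antidiagonal] at hx
        rw [ih x.2 (by omega)]
      have h4 : PowerSeries.coeff (n + 1) (expS u) * ((n : ℚ) + 1)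
          = PowerSeries.coeff (n + 1) g * ((n : ℚ) + 1) := by
        rw [← h1, ← h2, hDe, h3, mul_comm (Dq u), hODE]
      have hne : ((n : ℚ) + 1) ≠ 0 := by positivity
      exact mul_right_cancel₀ hne h4

end Glue


/-- Fix a prime `p`. For every formal power series `g ∈ ℚ[[t]]` with constant term `1`,
`ℰ_p(ℒ_p(g)) = g`. -/
theorem calEp_calLp (p : ℕ) (hp : p.Prime) (g : PowerSeries ℚ)
    (hg : PowerSeries.constantCoeff g = 1) : calEp p (calLp p g) = g := by
  rw [calEp, mainSum_eq p hp hg, expS_logS hg]
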